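/- Fix n ≥ 1, set b = ⌊log₂ n⌋ + 2, and let t be an integer. In ℤ[X₀, …, X_{b−1}], let I′ be the ideal generated by Xᵢ² − (−2·Xᵢ + X_{i+1}) for 0 ≤ i ≤ b−2 together with X_{b−1}². If g is a multilinear polynomial with (t + 1 + X₀)ⁿ − g ∈ I′, then evaluating g at X₀ = X₁ = ⋯ = X_{b−1} = 1 gives ∑_{k=0}^{n} C(n,k)·t^{n−k}·2^{wt(k)}, the t-th binomial transform of Gould's sequence, where wt(k) is the number of ones in the binary expansion of k. -/

import Mathlib

namespace Stmt10Aux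

open Polynomial Finset

/-- binary weight -/
def wt (k : ℕ) : ℕ := (Nat.digits 2 k).sum

lemma wt_eq (r : ℕ) : wt r = r % 2 + wt (r / 2) := by
  rcases Nat.eq_zero_or_pos r with h | h
  · simp [h, wt]
  · rw [wt, Nat.digits_def' (by norm_num : 1 < 2) h]; simp [wt]

lemma wt_pow_add {m r : ℕ} (h : r < 2 ^ m) : wt (2 ^ m + r) = 1 + wt r := by
  induction m generalizing r with
  | zero =>
    interval_cases r
    simp [wt]
  | succ m ih =>
    have h2 : (2:ℕ) ^ (m+1) = 2 * 2 ^ m := by ring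
    have hr2 : r / 2 < 2 ^ m := by omega
    have e1 : (2 ^ (m+1) + r) % 2 = r % 2 := by omega
    have e2 : (2 ^ (m+1) + r) / 2 = 2 ^ m + r / 2 := by omega
    rw [wt_eq (2 ^ (m+1) + r), e1, e2, ih hr2, wt_eq r]
    omega

lemma sum_two_pow (m : ℕ) : ∑ i ∈ range m, 2 ^ i = 2 ^ m - 1 := by
  induction m with
  | zero => simp
  | succ m ih =>
    rw [Finset.sum_range_succ, ih]
    have : 1 ≤ 2 ^ m := Nat.one_le_two_pow
    omega

lemma wt_sum (m : ℕ) (s : Finset ℕ) (h : ∀ i ∈ s, i < m) :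
    wt (∑ i ∈ s, 2 ^ i) = s.card := by
  induction m generalizing s with
  | zero =>
    have : s = ∅ := Finset.eq_empty_of_forall_notMem (fun x hx => absurd (h x hx) (Nat.not_lt_zero x))
    simp [this, wt]
  | succ m ih =>
    by_cases hm : m ∈ s
    · have hsub : s.erase m ⊆ range m := by
        intro i hi
        simp only [Finset.mem_erase] at hi
        have := h i hi.2
        simp only [Finset.mem_range]
        omega
      have hlt : ∑ i ∈ s.erase m, 2 ^ i < 2 ^ m := by
        have h1 : ∑ i ∈ s.erase m, 2 ^ i ≤ ∑ i ∈ range m, 2 ^ i :=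
          Finset.sum_le_sum_of_subset hsub
        rw [sum_two_pow] at h1
        have h2 : (1:ℕ) ≤ 2 ^ m := Nat.one_le_two_pow
        omega
      rw [← Finset.add_sum_erase _ _ hm, wt_pow_add hlt,
        ih _ (fun i hi => by have := Finset.mem_range.mp (hsub hi); omega)]
      rw [Finset.card_erase_of_mem hm]
      have : 1 ≤ s.card := Finset.card_pos.mpr ⟨m, hm⟩
      omega
    · exact ih s (fun i hi => by have := h i hi; rcases Nat.lt_succ_iff_lt_or_eq.mp this with h'|h'; exact h'; exact absurd (h' ▸ hi) hm)

/-- coefficient functional -/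
def c (m k : ℕ) : ℤ := (k / 2 ^ m + 1 : ℕ) * 2 ^ wt (k % 2 ^ m)

lemma c_of_lt {m k : ℕ} (h : k < 2 ^ m) : c m k = 2 ^ wt k := by
  unfold c
  rw [Nat.div_eq_of_lt h, Nat.mod_eq_of_lt h]
  push_cast; ring

lemma c_add_pow (m k : ℕ) : c m (k + 2 ^ m) = c m k + 2 ^ wt (k % 2 ^ m) := by
  unfold c
  rw [Nat.add_div_right _ (pow_pos two_pos m), Nat.add_mod_right]
  push_cast; ring

noncomputable def L (m : ℕ) : Polynomial ℤ →+ ℤ where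
  toFun p := p.sum fun k a => a * c m k
  map_zero' := by simp
  map_add' p q := Polynomial.sum_add_index p q (fun k a => a * c m k)
    (fun k => by simp) (fun k a b => add_mul a b (c m k))

lemma L_monomial (m k : ℕ) (a : ℤ) : L m (Polynomial.monomial k a) = a * c m k := by
  show (Polynomial.monomial k a).sum (fun k a => a * c m k) = _
  rw [Polynomial.sum_monomial_index]
  simp

lemma L_C_mul_X_pow (m k : ℕ) (a : ℤ) : L m (Polynomial.C a * Polynomial.X ^ k) = a * c m k := by
  rw [Polynomial.C_mul_X_pow_eq_monomial, L_monomial]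


lemma L_C_mul (m : ℕ) (a : ℤ) (p : Polynomial ℤ) : L m (Polynomial.C a * p) = a * L m p := by
  induction p using Polynomial.induction_on' with
  | add p q hp hq => rw [mul_add, map_add, map_add, hp, hq, mul_add]
  | monomial k b => rw [Polynomial.C_mul_monomial, L_monomial, L_monomial]; ring

lemma L_mul_rel (m : ℕ) (p : Polynomial ℤ) :
    L m (p * (Polynomial.X ^ 2 ^ m - 1) ^ 2) = 0 := by
  induction p using Polynomial.induction_on' with
  | add p q hp hq => rw [add_mul, map_add, hp, hq, add_zero]
  | monomial k a =>
    have hrw : (Polynomial.monomial k a : Polynomial ℤ) * (Polynomial.X ^ 2 ^ m - 1) ^ 2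
        = Polynomial.C a * Polynomial.X ^ (k + 2 ^ m + 2 ^ m)
          - Polynomial.C (2 * a) * Polynomial.X ^ (k + 2 ^ m)
          + Polynomial.C a * Polynomial.X ^ k := by
      rw [← Polynomial.C_mul_X_pow_eq_monomial, Polynomial.C_mul,
        show Polynomial.C (2:ℤ) = 2 by norm_num]
      ring
    rw [hrw, map_add, map_sub, L_C_mul_X_pow, L_C_mul_X_pow, L_C_mul_X_pow]
    have h1 := c_add_pow m k
    have h2 := c_add_pow m (k + 2 ^ m)
    rw [Nat.add_mod_right] at h2
    linear_combination a * h2 - a * h1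

lemma c_sum (m : ℕ) (s : Finset (Fin (m + 1))) :
    c m (∑ i ∈ s, 2 ^ (i : ℕ)) = 2 ^ s.card := by
  classical
  have key : ∀ u : Finset (Fin (m + 1)), (∀ i ∈ u, (i : ℕ) < m) →
      (∑ i ∈ u, 2 ^ (i : ℕ)) < 2 ^ m ∧ wt (∑ i ∈ u, 2 ^ (i : ℕ)) = u.card := by
    intro u hu
    have hinj : Set.InjOn (fun i : Fin (m+1) => (i : ℕ)) u := fun x _ y _ h => Fin.ext h
    have hsum : (∑ i ∈ u, 2 ^ (i : ℕ)) = ∑ j ∈ u.image (fun i : Fin (m+1) => (i : ℕ)), 2 ^ j :=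
      (Finset.sum_image (fun x hx y hy h => hinj hx hy h)).symm
    have hcard : (u.image (fun i : Fin (m+1) => (i : ℕ))).card = u.card :=
      Finset.card_image_of_injOn hinj
    have hsub : u.image (fun i : Fin (m+1) => (i : ℕ)) ⊆ Finset.range m := by
      intro j hj
      rcases Finset.mem_image.mp hj with ⟨i, hi, rfl⟩
      exact Finset.mem_range.mpr (hu i hi)
    constructor
    · rw [hsum]
      have h1 : ∑ j ∈ u.image (fun i : Fin (m+1) => (i : ℕ)), 2 ^ j ≤ ∑ j ∈ Finset.range m, 2 ^ j :=
        Finset.sum_le_sum_of_subset hsub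
      rw [sum_two_pow] at h1
      have h2 : (1:ℕ) ≤ 2 ^ m := Nat.one_le_two_pow
      omega
    · rw [hsum, wt_sum m _ (fun j hj => Finset.mem_range.mp (hsub hj)), hcard]
  set top : Fin (m + 1) := ⟨m, Nat.lt_succ_self m⟩ with htop
  by_cases hm : top ∈ s
  · have herase : ∀ i ∈ s.erase top, (i : ℕ) < m := by
      intro i hi
      rcases Finset.mem_erase.mp hi with ⟨hne, _⟩
      have : (i : ℕ) ≠ m := fun h => hne (Fin.ext h)
      omega
    obtain ⟨hlt, hwt⟩ := key (s.erase top) herase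
    rw [← Finset.add_sum_erase _ _ hm]
    have htopv : (2:ℕ) ^ ((top : Fin (m+1)) : ℕ) = 2 ^ m := by rw [htop]
    rw [htopv, add_comm, c_add_pow, Nat.mod_eq_of_lt hlt, c_of_lt hlt, hwt]
    have hc : 1 ≤ s.card := Finset.card_pos.mpr ⟨top, hm⟩
    have hcard : s.card = (s.erase top).card + 1 := by
      rw [Finset.card_erase_of_mem hm]; omega
    rw [hcard, pow_succ]
    ring
  · have hall : ∀ i ∈ s, (i : ℕ) < m := by
      intro i hi
      have : (i : ℕ) ≠ m := fun h => hm (by rwa [show top = i from Fin.ext (by rw [htop]; exact h.symm)])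
      omega
    obtain ⟨hlt, hwt⟩ := key s hall
    rw [c_of_lt hlt, hwt]

lemma L_prod (m : ℕ) (s : Finset (Fin (m + 1))) (a : ℤ) :
    L m (Polynomial.C a * ∏ i ∈ s, (Polynomial.X ^ 2 ^ (i : ℕ) - 1)) = a := by
  classical
  rw [L_C_mul]
  have hexp : (∏ i ∈ s, (Polynomial.X ^ 2 ^ (i : ℕ) - (1:Polynomial ℤ)))
      = ∑ t ∈ s.powerset, (∏ i ∈ t, Polynomial.X ^ 2 ^ (i : ℕ)) * ∏ _i ∈ s \ t, (-1 : Polynomial ℤ) := by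
    rw [← Finset.prod_add]
    exact Finset.prod_congr rfl fun i _ => by ring
  rw [hexp, map_sum]
  have each : ∀ t ∈ s.powerset,
      L m ((∏ i ∈ t, Polynomial.X ^ 2 ^ (i : ℕ)) * ∏ _i ∈ s \ t, (-1 : Polynomial ℤ))
        = (∏ _i ∈ t, (2:ℤ)) * ∏ _i ∈ s \ t, (-1 : ℤ) := by
    intro t ht
    rw [Finset.prod_pow_eq_pow_sum, Finset.prod_const, Finset.prod_const, Finset.prod_const]
    have hneg : ((-1 : Polynomial ℤ)) ^ (s \ t).card = Polynomial.C ((-1 : ℤ) ^ (s \ t).card) := by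
      simp
    rw [hneg, mul_comm, L_C_mul_X_pow, c_sum m t]
    ring
  rw [Finset.sum_congr rfl each, ← Finset.prod_add]
  simp

end Stmt10Aux

open MvPolynomial
open Stmt10Aux

/-- The generators of the ideal `I′`: `Xᵢ² − (−2Xᵢ + X_{i+1})` for `i ≤ b-2`, and `X_{b-1}²`. -/
noncomputable def gens' (b : ℕ) : Fin b → MvPolynomial (Fin b) ℤ := fun i =>
  if h : (i : ℕ) + 1 < b then X i ^ 2 - (-2 * X i + X ⟨(i : ℕ) + 1, h⟩) else X i ^ 2

theorem stmt10 (n : ℕ) (hn : 1 ≤ n) (b : ℕ) (hb : b = Nat.log 2 n + 2) (t : ℤ)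
    (g : MvPolynomial (Fin b) ℤ)
    (hml : ∀ m ∈ g.support, ∀ i : Fin b, m i ≤ 1)
    (hg : (C t + 1 + X (⟨0, by omega⟩ : Fin b)) ^ n - g ∈ Ideal.span (Set.range (gens' b))) :
    eval (fun _ : Fin b => (1 : ℤ)) g
      = ∑ k ∈ Finset.range (n + 1),
          (n.choose k : ℤ) * t ^ (n - k) * 2 ^ (Nat.digits 2 k).sum := by
  classical
  have key : ∀ (m : ℕ) (g : MvPolynomial (Fin (m + 1)) ℤ), n < 2 ^ m →
      (∀ v ∈ g.support, ∀ i : Fin (m + 1), v i ≤ 1) →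
      (C t + 1 + X (⟨0, Nat.succ_pos m⟩ : Fin (m + 1))) ^ n - g
        ∈ Ideal.span (Set.range (gens' (m + 1))) →
      eval (fun _ : Fin (m + 1) => (1 : ℤ)) g
        = ∑ k ∈ Finset.range (n + 1),
            (n.choose k : ℤ) * t ^ (n - k) * 2 ^ (Nat.digits 2 k).sum := by
    intro m g hn2 hml hg
    set φ : MvPolynomial (Fin (m + 1)) ℤ →ₐ[ℤ] Polynomial ℤ :=
      MvPolynomial.aeval (fun i : Fin (m + 1) => Polynomial.X ^ 2 ^ (i : ℕ) - 1) with hφ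
    have hIdeal : ∀ x ∈ Ideal.span (Set.range (gens' (m + 1))), L m (φ x) = 0 := by
      have hle : Ideal.span (Set.range (gens' (m + 1))) ≤
          Ideal.comap (φ : MvPolynomial (Fin (m + 1)) ℤ →+* Polynomial ℤ)
            (Ideal.span {(Polynomial.X ^ 2 ^ m - 1) ^ 2}) := by
        rw [Ideal.span_le]
        rintro _ ⟨i, rfl⟩
        simp only [SetLike.mem_coe, Ideal.mem_comap, RingHom.coe_coe]
        unfold gens'
        split_ifs with h
        · have hz : φ (X i ^ 2 - (-2 * X i + X ⟨(i : ℕ) + 1, h⟩)) = 0 := by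
            simp only [hφ, map_sub, map_add, map_mul, map_pow, map_neg, map_ofNat,
              MvPolynomial.aeval_X, Fin.val_mk]
            have h2 : (2 : ℕ) ^ ((i : ℕ) + 1) = 2 ^ (i : ℕ) * 2 := pow_succ 2 (i : ℕ)
            rw [h2]
            ring
          rw [hz]
          exact Ideal.zero_mem _
        · have hi : (i : ℕ) = m := by have := i.isLt; omega
          have heq : φ (X i ^ 2) = (Polynomial.X ^ 2 ^ m - 1) ^ 2 := by
            simp only [hφ, map_pow, MvPolynomial.aeval_X, hi]
          rw [heq]
          exact Ideal.subset_span rfl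
      intro x hx
      have hx2 := hle hx
      rw [Ideal.mem_comap, Ideal.mem_span_singleton] at hx2
      obtain ⟨q, hq⟩ := hx2
      rw [RingHom.coe_coe] at hq
      rw [hq, mul_comm]
      exact L_mul_rel m q
    have hLg : L m (φ g) = eval (fun _ : Fin (m + 1) => (1 : ℤ)) g := by
      conv_lhs => rw [g.as_sum]
      rw [map_sum, map_sum, MvPolynomial.eval_eq]
      apply Finset.sum_congr rfl
      intro v hv
      have hφmono : φ (MvPolynomial.monomial v (MvPolynomial.coeff v g))
          = Polynomial.C (MvPolynomial.coeff v g)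
            * ∏ i ∈ v.support, (Polynomial.X ^ 2 ^ (i : ℕ) - 1) := by
        rw [hφ, MvPolynomial.aeval_monomial]
        have halg : (algebraMap ℤ (Polynomial ℤ)) (MvPolynomial.coeff v g)
            = Polynomial.C (MvPolynomial.coeff v g) := by
          simp [algebraMap_int_eq, Polynomial.C_eq_intCast]
        rw [halg]
        congr 1
        rw [Finsupp.prod]
        apply Finset.prod_congr rfl
        intro i hi
        have h1 : v i = 1 :=
          le_antisymm (hml v hv i) (Nat.one_le_iff_ne_zero.mpr (Finsupp.mem_support_iff.mp hi))
        rw [h1, pow_one]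
      rw [hφmono, L_prod]
      simp
    have hφpow : φ ((C t + 1 + X (⟨0, Nat.succ_pos m⟩ : Fin (m + 1))) ^ n)
        = (Polynomial.X + Polynomial.C t) ^ n := by
      rw [map_pow]
      congr 1
      simp only [hφ, map_add, map_one, MvPolynomial.aeval_X, MvPolynomial.aeval_C,
        algebraMap_int_eq, Fin.val_mk, pow_zero, pow_one]
      rw [show ((algebraMap ℤ (Polynomial ℤ)) t) = Polynomial.C t from by simp [Polynomial.algebraMap_apply]]
      ring
    have hLpow : L m ((Polynomial.X + Polynomial.C t) ^ n)
        = ∑ k ∈ Finset.range (n + 1), (n.choose k : ℤ) * t ^ (n - k) * 2 ^ wt k := by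
      rw [add_pow, map_sum]
      apply Finset.sum_congr rfl
      intro k hk
      have hterm : Polynomial.X ^ k * Polynomial.C t ^ (n - k) * (n.choose k : Polynomial ℤ)
          = Polynomial.C (t ^ (n - k) * (n.choose k : ℤ)) * Polynomial.X ^ k := by
        simp only [Polynomial.C_mul, Polynomial.C_pow, Polynomial.C_eq_natCast]
        ring
      rw [hterm, L_C_mul_X_pow,
        c_of_lt (lt_of_le_of_lt (Nat.lt_succ_iff.mp (Finset.mem_range.mp hk)) hn2)]
      ring
    have hsub := hIdeal _ hg
    rw [map_sub, map_sub, sub_eq_zero] at hsub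
    rw [← hLg, ← hsub, hφpow, hLpow]
    rfl
  subst hb
  exact key (Nat.log 2 n + 1) g (Nat.lt_pow_succ_log_self (by norm_num) n) hml hg
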